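/- arXiv:1806.06047 — 3 statements merged into one kernel-verified Lean document; each statement's English description precedes it below -/
import Mathlib

section
/- For all u, v ∈ (0,1), the Kullback–Leibler divergence between Bernoulli distributions satisfies D(u‖v) ≥ (u − v)² / (2·max{u,v}), where D(u‖v) = u·ln(u/v) + (1−u)·ln((1−u)/(1−v)). -/
/-- KL divergence between Bernoulli(u) and Bernoulli(v). -/
noncomputable def bernoulliKL (u v : ℝ) : ℝ :=
  u * Real.log (u / v) + (1 - u) * Real.log ((1 - u) / (1 - v))

/-- For `0 < x ≤ 1`, `log x ≤ (x-1) - (x-1)²/2`. -/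
lemma aux_logA {x : ℝ} (hx : 0 < x) (hx1 : x ≤ 1) :
    Real.log x ≤ (x - 1) - (x - 1) ^ 2 / 2 := by
  set f : ℝ → ℝ := fun y => (y - 1) - (y - 1) ^ 2 / 2 - Real.log y with hf
  have key : AntitoneOn f (Set.Icc x 1) := by
    have hsub : Set.Icc x 1 ⊆ {(0:ℝ)}ᶜ := by
      intro y hy; simp only [Set.mem_compl_iff, Set.mem_singleton_iff]
      exact ne_of_gt (lt_of_lt_of_le hx hy.1)
    apply antitoneOn_of_deriv_nonpos (convex_Icc x 1)
    · exact ((continuousOn_id.sub continuousOn_const).sub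
        (((continuousOn_id.sub continuousOn_const).pow 2).div_const 2)).sub
        (Real.continuousOn_log.mono hsub)
    · intro y hy
      rw [interior_Icc] at hy
      have hy0 : 0 < y := hx.trans hy.1
      have h1 : HasDerivAt (fun y : ℝ => y - 1) 1 y := (hasDerivAt_id y).sub_const 1
      have hd : HasDerivAt f (1 - ((2:ℕ) * (y - 1) ^ 1 * 1) / 2 - y⁻¹) y :=
        (h1.sub ((h1.pow 2).div_const 2)).sub (Real.hasDerivAt_log hy0.ne')
      exact hd.differentiableAt.differentiableWithinAt
    · intro y hy
      rw [interior_Icc] at hy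
      have hy0 : 0 < y := hx.trans hy.1
      have h1 : HasDerivAt (fun y : ℝ => y - 1) 1 y := (hasDerivAt_id y).sub_const 1
      have hd : HasDerivAt f (1 - ((2:ℕ) * (y - 1) ^ 1 * 1) / 2 - y⁻¹) y :=
        (h1.sub ((h1.pow 2).div_const 2)).sub (Real.hasDerivAt_log hy0.ne')
      rw [hd.deriv]
      have h2 : (0:ℝ) < y⁻¹ := inv_pos.2 hy0
      have h3 : y * y⁻¹ = 1 := mul_inv_cancel₀ hy0.ne'
      nlinarith [sq_nonneg (y - 1)]
  have hx_mem : x ∈ Set.Icc x 1 := Set.left_mem_Icc.2 hx1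
  have h1_mem : (1:ℝ) ∈ Set.Icc x 1 := Set.right_mem_Icc.2 hx1
  have := key hx_mem h1_mem hx1
  simp only [hf, Real.log_one] at this
  linarith [this]

/-- For `0 < x ≤ 1`, `(x²-1)/2 ≤ x·log x`. -/
lemma aux_logB {x : ℝ} (hx : 0 < x) (hx1 : x ≤ 1) :
    (x ^ 2 - 1) / 2 ≤ x * Real.log x := by
  set f : ℝ → ℝ := fun y => y * Real.log y - (y ^ 2 - 1) / 2 with hf
  have key : AntitoneOn f (Set.Icc x 1) := by
    have hsub : Set.Icc x 1 ⊆ {(0:ℝ)}ᶜ := by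
      intro y hy; simp only [Set.mem_compl_iff, Set.mem_singleton_iff]
      exact ne_of_gt (lt_of_lt_of_le hx hy.1)
    apply antitoneOn_of_deriv_nonpos (convex_Icc x 1)
    · exact (continuousOn_id.mul (Real.continuousOn_log.mono hsub)).sub
        (((continuousOn_id.pow 2).sub continuousOn_const).div_const 2)
    · intro y hy
      rw [interior_Icc] at hy
      have hy0 : 0 < y := hx.trans hy.1
      have hd : HasDerivAt f (1 * Real.log y + y * y⁻¹ - (2:ℕ) * y ^ 1 * 1 / 2) y :=
        ((hasDerivAt_id y).mul (Real.hasDerivAt_log hy0.ne')).sub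
          ((((hasDerivAt_id y).pow 2).sub_const 1).div_const 2)
      exact hd.differentiableAt.differentiableWithinAt
    · intro y hy
      rw [interior_Icc] at hy
      have hy0 : 0 < y := hx.trans hy.1
      have hd : HasDerivAt f (1 * Real.log y + y * y⁻¹ - (2:ℕ) * y ^ 1 * 1 / 2) y :=
        ((hasDerivAt_id y).mul (Real.hasDerivAt_log hy0.ne')).sub
          ((((hasDerivAt_id y).pow 2).sub_const 1).div_const 2)
      rw [hd.deriv]
      have h3 : y * y⁻¹ = 1 := mul_inv_cancel₀ hy0.ne'
      have h4 : Real.log y ≤ y - 1 := Real.log_le_sub_one_of_pos hy0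
      nlinarith
  have hx_mem : x ∈ Set.Icc x 1 := Set.left_mem_Icc.2 hx1
  have h1_mem : (1:ℝ) ∈ Set.Icc x 1 := Set.right_mem_Icc.2 hx1
  have := key hx_mem h1_mem hx1
  simp only [hf, Real.log_one] at this
  linarith [this]

/-- Per-term lower bound: for `a, b > 0`,
`a·log(a/b) ≥ a - b + (a-b)²/(2·max a b)`. -/
lemma aux_term {a b : ℝ} (ha : 0 < a) (hb : 0 < b) :
    a - b + (a - b) ^ 2 / (2 * max a b) ≤ a * Real.log (a / b) := by
  rcases le_total a b with hab | hab
  · -- max = b, use aux_logB with x = a/b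
    rw [max_eq_right hab]
    have hx : 0 < a / b := div_pos ha hb
    have hx1 : a / b ≤ 1 := (div_le_one hb).2 hab
    have h := aux_logB hx hx1
    have hb' : b ≠ 0 := hb.ne'
    rw [div_pow] at h
    have h2 : ((a ^ 2 / b ^ 2 - 1) / 2) * b ≤ (a / b * Real.log (a / b)) * b :=
      mul_le_mul_of_nonneg_right h hb.le
    have e1 : (a / b * Real.log (a / b)) * b = a * Real.log (a / b) := by
      field_simp
    have e2 : ((a ^ 2 / b ^ 2 - 1) / 2) * b = (a ^ 2 - b ^ 2) / (2 * b) := by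
      field_simp
    rw [e1, e2] at h2
    have e3 : a - b + (a - b) ^ 2 / (2 * b) = (a ^ 2 - b ^ 2) / (2 * b) := by
      field_simp; ring
    linarith [h2, e3.le]
  · -- max = a, use aux_logA with x = b/a
    rw [max_eq_left hab]
    have hx : 0 < b / a := div_pos hb ha
    have hx1 : b / a ≤ 1 := (div_le_one ha).2 hab
    have h := aux_logA hx hx1
    have hlog : Real.log (a / b) = -Real.log (b / a) := by
      rw [← Real.log_inv]; congr 1; rw [inv_div]
    rw [hlog]
    have h2 : a * (-Real.log (b / a)) ≥ a * (-((b / a - 1) - (b / a - 1) ^ 2 / 2)) := by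
      apply mul_le_mul_of_nonneg_left _ ha.le
      linarith
    have e1 : a * (-((b / a - 1) - (b / a - 1) ^ 2 / 2)) =
        a - b + (a - b) ^ 2 / (2 * a) := by
      field_simp
      ring
    linarith [h2, e1.le]

/-- For all `u, v ∈ (0,1)`,
`D(u‖v) ≥ (u - v)² / (2 max{u,v})`. -/
theorem bernoulliKL_lower_bound (u v : ℝ)
    (hu : u ∈ Set.Ioo (0:ℝ) 1) (hv : v ∈ Set.Ioo (0:ℝ) 1) :
    (u - v) ^ 2 / (2 * max u v) ≤ bernoulliKL u v := by
  obtain ⟨hu0, hu1⟩ := hu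
  obtain ⟨hv0, hv1⟩ := hv
  have h1 := aux_term hu0 hv0
  have h2 := aux_term (by linarith : (0:ℝ) < 1 - u) (by linarith : (0:ℝ) < 1 - v)
  have h2' : (0:ℝ) ≤ (1 - u - (1 - v)) ^ 2 / (2 * max (1 - u) (1 - v)) := by
    apply div_nonneg (sq_nonneg _)
    have : (0:ℝ) < max (1 - u) (1 - v) := lt_max_of_lt_left (by linarith)
    linarith
  unfold bernoulliKL
  nlinarith [h1, h2, h2']
end

section
/- For u ∈ (0,1) and Δ > 0 with Δ ≤ u, define V(u,Δ) = max{ v ∈ [u,1] : D(u‖v) ≤ Δ } where D is the Bernoulli KL divergence. If u + √(9uΔ) ≤ 1 then V(u,Δ) ≤ u + √(9uΔ). -/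
lemma core_ineq (x : ℝ) (hx : 0 < x) (hx1 : x ≤ 1) :
    x - 1 + (1 - x)^2 / 2 ≤ x * Real.log x := by
  set f : ℝ → ℝ := fun t => t * Real.log t - (t - 1) - (1 - t) ^ 2 / 2 with hf
  have hderiv : ∀ t : ℝ, 0 < t → HasDerivAt f (Real.log t + 1 - t) t := by
    intro t ht
    have h1 : HasDerivAt (fun t : ℝ => t * Real.log t) (Real.log t + 1) t :=
      Real.hasDerivAt_mul_log (ne_of_gt ht)
    have h2 : HasDerivAt (fun t : ℝ => t - 1) 1 t :=
      (hasDerivAt_id t).sub_const 1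
    have h3 : HasDerivAt (fun t : ℝ => (1 - t) ^ 2 / 2) (t - 1) t := by
      have h0 : HasDerivAt (fun t : ℝ => (1 - t) ^ 2)
          (2 * (1 - t) ^ 1 * (0 - 1)) t :=
        ((hasDerivAt_const t (1 : ℝ)).sub (hasDerivAt_id t)).pow 2
      have := h0.div_const 2
      refine this.congr_deriv ?_
      ring
    have := (h1.sub h2).sub h3
    refine this.congr_deriv ?_
    ring
  have hanti : AntitoneOn f (Set.Icc x 1) := by
    apply antitoneOn_of_deriv_nonpos (convex_Icc x 1)
    · exact fun t ht => ((hderiv t (lt_of_lt_of_le hx ht.1)).continuousAt).continuousWithinAt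
    · intro t ht
      rw [interior_Icc] at ht
      exact ((hderiv t (lt_of_lt_of_le hx ht.1.le)).differentiableAt).differentiableWithinAt
    · intro t ht
      rw [interior_Icc] at ht
      have htpos : 0 < t := lt_of_lt_of_le hx ht.1.le
      rw [(hderiv t htpos).deriv]
      have := Real.log_le_sub_one_of_pos htpos
      linarith
  have h0 : f 1 = 0 := by simp [hf]
  have := hanti (Set.left_mem_Icc.mpr hx1) (Set.right_mem_Icc.mpr hx1) hx1
  rw [h0] at this
  simp only [hf] at this
  linarith

lemma kl_lower (u v : ℝ) (hu : 0 < u) (huv : u ≤ v) (hv : v < 1) :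
    (v - u)^2 / (2 * v) ≤ bernoulliKL u v := by
  have hv0 : 0 < v := lt_of_lt_of_le hu huv
  have h1v : 0 < 1 - v := by linarith
  have h1u : 0 < 1 - u := by linarith
  -- second term ≥ v - u
  have hsecond : v - u ≤ (1 - u) * Real.log ((1 - u) / (1 - v)) := by
    have hlog : Real.log ((1 - v) / (1 - u)) ≤ (1 - v) / (1 - u) - 1 :=
      Real.log_le_sub_one_of_pos (by positivity)
    have heq : Real.log ((1 - u) / (1 - v)) = - Real.log ((1 - v) / (1 - u)) := by
      rw [Real.log_div (by linarith) (by linarith), Real.log_div (by linarith) (by linarith)]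
      ring
    rw [heq]
    have h2 : (1 - u) * Real.log ((1 - v) / (1 - u)) ≤ (1 - u) * ((1 - v) / (1 - u) - 1) :=
      mul_le_mul_of_nonneg_left hlog (le_of_lt h1u)
    have h3 : (1 - u) * ((1 - v) / (1 - u) - 1) = u - v := by
      field_simp
      ring
    have h4 : (1 - u) * -Real.log ((1 - v) / (1 - u))
        = -((1 - u) * Real.log ((1 - v) / (1 - u))) := by ring
    rw [h4]
    linarith [h2, h3]
  -- first term ≥ (u - v) + (v-u)^2/(2v)
  have hfirst : (u - v) + (v - u)^2 / (2 * v) ≤ u * Real.log (u / v) := by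
    have hx : 0 < u / v := by positivity
    have hx1 : u / v ≤ 1 := (div_le_one hv0).mpr huv
    have hc := core_ineq (u / v) hx hx1
    have hmul := mul_le_mul_of_nonneg_left hc (le_of_lt hv0)
    have hlog : v * (u / v * Real.log (u / v)) = u * Real.log (u / v) := by
      field_simp
    rw [hlog] at hmul
    have hkey : v * (u / v - 1 + (1 - u / v)^2 / 2) = (u - v) + (v - u)^2 / (2 * v) := by
      field_simp
    linarith [hkey.symm.le.trans hmul]
  unfold bernoulliKL
  linarith

/-- Let `V(u,Δ) = max{v ∈ [u,1] : D(u‖v) ≤ Δ}` (note `D(u‖1) = +∞`,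
so the constraint set lies in `[u,1)`). For `u ∈ (0,1)`, `0 < Δ ≤ u`, if
`u + √(9uΔ) ≤ 1` then `V(u,Δ) ≤ u + √(9uΔ)`. -/
theorem ucb_upper_bound (u Δ : ℝ) (hu : u ∈ Set.Ioo (0:ℝ) 1)
    (hΔpos : 0 < Δ) (hΔu : Δ ≤ u)
    (hin : u + Real.sqrt (9 * u * Δ) ≤ 1) :
    sSup {v | v ∈ Set.Ico u 1 ∧ bernoulliKL u v ≤ Δ}
      ≤ u + Real.sqrt (9 * u * Δ) := by
  obtain ⟨hu0, hu1⟩ := hu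
  set s := Real.sqrt (9 * u * Δ) with hs
  have hs0 : 0 ≤ s := Real.sqrt_nonneg _
  have hs2 : s ^ 2 = 9 * u * Δ := Real.sq_sqrt (by positivity)
  apply Real.sSup_le
  · rintro v ⟨⟨huv, hv1⟩, hkl⟩
    by_contra h
    push_neg at h
    have hlow := kl_lower u v hu0 huv hv1
    have hv0 : 0 < v := lt_of_lt_of_le hu0 huv
    have hDΔ : (v - u)^2 / (2 * v) ≤ Δ := le_trans hlow hkl
    rw [div_le_iff₀ (by positivity)] at hDΔ
    have hvu : s < v - u := by linarith
    have hsq : s^2 < (v - u)^2 := by nlinarith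
    nlinarith [hsq, hDΔ, hs2, hv0]
  · positivity
end

section
/- Let P be reversible, irreducible, aperiodic and lazy on finite Ω with eigenvalues 1 = λ₁ > λ₂ ≥ λ₃ ≥ … ≥ λ_{|Ω|} ≥ 0 and λ₃ > 0, and m_k = (1/|Ω|)∑ᵢ λᵢ^k. Then for all k ≥ 1, (|Ω|·m_k − 1)^{1/k} ≤ λ₂ + (λ₂|Ω|/k)·(λ₃/λ₂)^k; in particular the bias E_{k,1} := (|Ω|·m_k − 1)^{1/k} − λ₂ satisfies E_{k,1} ≤ (|Ω|/k)·(λ₃/λ₂)^k. -/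
/-- With eigenvalues `1 = λ₁ > λ₂ ≥ λ₃ ≥ … ≥ λ_n ≥ 0`, `λ₃ > 0`,
and `m_k = (1/n) ∑ᵢ λᵢ^k`, for all `k ≥ 1`:
`(n·m_k - 1)^{1/k} ≤ λ₂ + (λ₂·n/k)·(λ₃/λ₂)^k`, and in particular the bias
`(n·m_k - 1)^{1/k} - λ₂ ≤ (n/k)·(λ₃/λ₂)^k`. -/
theorem bias_upper_bound
    {n : ℕ} (hn : 3 ≤ n) (P : Matrix (Fin n) (Fin n) ℝ)
    (hnonneg : ∀ x y, 0 ≤ P x y)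
    (hrow : ∀ x, ∑ y, P x y = 1)
    (statDist : Fin n → ℝ)
    (hstatPos : ∀ x, 0 < statDist x)
    (hstatSum : ∑ x, statDist x = 1)
    (hrev : ∀ x y, statDist x * P x y = statDist y * P y x)
    (hlazy : ∀ x, (1:ℝ)/2 ≤ P x x)
    (lam : Fin n → ℝ)
    (hmono : Antitone lam)
    (hlam1 : lam ⟨0, by omega⟩ = 1)
    (hlam2 : lam ⟨1, by omega⟩ < 1)
    (hlam3pos : 0 < lam ⟨2, by omega⟩)
    (hlamNonneg : ∀ i, 0 ≤ lam i)
    (htrace : ∀ k : ℕ, Matrix.trace (P ^ k) = ∑ i, lam i ^ k)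
    (m : ℕ → ℝ)
    (hm : ∀ k, m k = (1 / (n:ℝ)) * ∑ i, lam i ^ k) :
    ∀ k : ℕ, 1 ≤ k →
      ((n:ℝ) * m k - 1) ^ ((1:ℝ)/k)
        ≤ lam ⟨1, by omega⟩
          + (lam ⟨1, by omega⟩ * (n:ℝ) / k) * (lam ⟨2, by omega⟩ / lam ⟨1, by omega⟩) ^ k
      ∧ ((n:ℝ) * m k - 1) ^ ((1:ℝ)/k) - lam ⟨1, by omega⟩
          ≤ ((n:ℝ) / k) * (lam ⟨2, by omega⟩ / lam ⟨1, by omega⟩) ^ k := by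
  intro k hk
  have hnR : (0:ℝ) < n := by positivity
  set i0 : Fin n := ⟨0, by omega⟩
  set i1 : Fin n := ⟨1, by omega⟩
  set i2 : Fin n := ⟨2, by omega⟩
  set l2 := lam i1 with hl2
  set l3 := lam i2 with hl3
  have hl3pos : 0 < l3 := hlam3pos
  have h32 : l3 ≤ l2 := hmono (by simp [i1, i2, Fin.le_def])
  have hl2pos : 0 < l2 := lt_of_lt_of_le hl3pos h32
  have hkR : (0:ℝ) < k := by exact_mod_cast hk
  set t : ℝ := ((n:ℝ)/k) * (l3/l2)^k with ht
  have htpos : 0 < t := by positivity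
  set R : ℝ := l2 + (l2 * (n:ℝ)/k) * (l3/l2)^k with hR
  -- S := n m_k - 1
  set S : ℝ := (n:ℝ) * m k - 1 with hS
  clear_value l2 l3 t R S
  have hRt : R = l2 * (1 + t) := by rw [hR, ht]; ring
  have hne : i0 ≠ i1 := by simp [i0, i1, Fin.ext_iff]
  have hsum : ∑ i, lam i ^ k
      = lam i0 ^ k + (lam i1 ^ k + ∑ i ∈ (Finset.univ.erase i0).erase i1, lam i ^ k) := by
    rw [← Finset.add_sum_erase _ (fun i => lam i ^ k) (Finset.mem_univ i0),
        ← Finset.add_sum_erase _ (fun i => lam i ^ k)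
          (Finset.mem_erase.mpr ⟨hne.symm, Finset.mem_univ i1⟩)]
  have hSval : S = l2 ^ k + ∑ i ∈ (Finset.univ.erase i0).erase i1, lam i ^ k := by
    rw [hS, hm k, hsum, hlam1, hl2]
    field_simp; ring
  have htail_le : ∑ i ∈ (Finset.univ.erase i0).erase i1, lam i ^ k ≤ (n:ℝ) * l3 ^ k := by
    calc ∑ i ∈ (Finset.univ.erase i0).erase i1, lam i ^ k
        ≤ ∑ _i ∈ (Finset.univ.erase i0).erase i1, l3 ^ k := by
          apply Finset.sum_le_sum
          intro i hi
          simp only [Finset.mem_erase] at hi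
          have h2i : i2 ≤ i := by
            rcases hi with ⟨h1, h0, -⟩
            have : 2 ≤ i.val := by
              rcases Nat.lt_or_ge i.val 2 with h | h
              · interval_cases h' : i.val
                · exact absurd (Fin.ext h') h0
                · exact absurd (Fin.ext h') h1
              · exact h
            exact this
          rw [hl3]
          exact pow_le_pow_left₀ (hlamNonneg i) (hmono h2i) k
      _ ≤ (n:ℝ) * l3 ^ k := by
          rw [Finset.sum_const, nsmul_eq_mul]
          apply mul_le_mul_of_nonneg_right _ (pow_nonneg hl3pos.le k)
          calc (((Finset.univ.erase i0).erase i1).card : ℝ)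
              ≤ (Finset.univ : Finset (Fin n)).card := by
                exact_mod_cast Finset.card_le_card
                  ((Finset.erase_subset _ _).trans (Finset.erase_subset _ _))
            _ = (n:ℝ) := by simp
  have hS_le : S ≤ l2 ^ k + (n:ℝ) * l3 ^ k := by
    rw [hSval]; exact (add_le_add_iff_left _).mpr htail_le
  have hS_nonneg : 0 ≤ S := by
    rw [hSval]
    have : (0:ℝ) ≤ ∑ i ∈ (Finset.univ.erase i0).erase i1, lam i ^ k :=
      Finset.sum_nonneg fun i _ => pow_nonneg (hlamNonneg i) k
    nlinarith [pow_nonneg hl2pos.le k]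
  have hRpow : l2 ^ k + (n:ℝ) * l3 ^ k ≤ R ^ k := by
    have hber : 1 + (k:ℝ) * t ≤ (1 + t) ^ k :=
      one_add_mul_le_pow (by linarith) k
    have hl3k : l2 ^ k * (l3/l2)^k = l3 ^ k := by
      rw [div_pow]; field_simp
    have : l2 ^ k * (1 + (k:ℝ) * t) ≤ l2 ^ k * (1 + t)^k := by
      apply mul_le_mul_of_nonneg_left hber (pow_nonneg hl2pos.le k)
    calc l2 ^ k + (n:ℝ) * l3 ^ k = l2 ^ k * (1 + (k:ℝ) * t) := by
          rw [ht, ← hl3k]; field_simp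
      _ ≤ l2 ^ k * (1 + t)^k := this
      _ = R ^ k := by rw [hRt, mul_pow]
  have hRpos : 0 < R := by rw [hRt]; positivity
  have hmain : S ^ ((1:ℝ)/k) ≤ R := by
    have h1 : S ^ ((1:ℝ)/k) ≤ (R ^ k) ^ ((1:ℝ)/k) :=
      Real.rpow_le_rpow hS_nonneg (hS_le.trans hRpow) (by positivity)
    have h2 : (R ^ k) ^ ((1:ℝ)/k) = R := by
      rw [← Real.rpow_natCast R k, ← Real.rpow_mul hRpos.le]
      rw [mul_one_div, div_self (by exact_mod_cast hkR.ne'), Real.rpow_one]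
    linarith [h1, h2.le, h2.ge]
  refine ⟨hmain, ?_⟩
  have hl2t : l2 * t ≤ t := by nlinarith
  have : R - l2 ≤ t := by rw [hRt]; nlinarith
  linarith
end
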